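/- Suppose λ_{i,1}·λ_{j,2} + η ≠ 0 for all i, j, and suppose R1 and R2 have all diagonal entries equal to 1 (correlation matrices). Then for each pixel (i,j), the diagonal entry at index (j,i) of the predictive covariance matrix R − R·R̃⁻¹·R, where R = R2 ⊗ R1, equals 1 − Σ_{j'=1}^{n2} Σ_{i'=1}^{n1} r̃_{i,i',1}²·r̃_{j,j',2}² / (λ_{i',1}·λ_{j',2} + η), where r̃_{i,i',1} is the (i,i') entry of R1·U1 and r̃_{j,j',2} is the (j,j') entry of R2·U2. -/

import Mathlib

open Matrix
open scoped Kronecker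

lemma udu_apply {n : Type*} [Fintype n] [DecidableEq n] (U : Matrix n n ℝ) (c : n → ℝ)
    (x : n) : (U * Matrix.diagonal c * Uᵀ) x x = ∑ k, (U x k) ^ 2 * c k := by
  rw [Matrix.mul_apply]
  refine Finset.sum_congr rfl fun k _ => ?_
  rw [Matrix.mul_diagonal, Matrix.transpose_apply]; ring

lemma sandwich {n : Type*} [Fintype n] [DecidableEq n] (U : Matrix n n ℝ) (d : n → ℝ) (η : ℝ)
    (hU : U * Uᵀ = 1) (hU' : Uᵀ * U = 1) (hnz : ∀ k, d k + η ≠ 0) :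
    (U * Matrix.diagonal d * Uᵀ) *
      ((U * Matrix.diagonal d * Uᵀ) + η • (1 : Matrix n n ℝ))⁻¹ *
      (U * Matrix.diagonal d * Uᵀ)
      = U * Matrix.diagonal (fun k => d k * (d k + η)⁻¹ * d k) * Uᵀ := by
  have hsum : (U * Matrix.diagonal d * Uᵀ) + η • (1 : Matrix n n ℝ)
      = U * Matrix.diagonal (fun k => d k + η) * Uᵀ := by
    have h1 : η • (1 : Matrix n n ℝ) = U * (η • (1 : Matrix n n ℝ)) * Uᵀ := by
      rw [Matrix.mul_smul, Matrix.smul_mul, Matrix.mul_one, hU]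
    rw [h1, ← Matrix.add_mul, ← Matrix.mul_add]
    congr 2
    rw [Matrix.smul_one_eq_diagonal, Matrix.diagonal_add]
  have hinv : ((U * Matrix.diagonal d * Uᵀ) + η • (1 : Matrix n n ℝ))⁻¹
      = U * Matrix.diagonal (fun k => (d k + η)⁻¹) * Uᵀ := by
    rw [hsum]
    refine Matrix.inv_eq_right_inv ?_
    calc U * Matrix.diagonal (fun k => d k + η) * Uᵀ *
          (U * Matrix.diagonal (fun k => (d k + η)⁻¹) * Uᵀ)
        = U * (Matrix.diagonal (fun k => d k + η) * (Uᵀ * U) *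
            Matrix.diagonal (fun k => (d k + η)⁻¹)) * Uᵀ := by
          simp only [Matrix.mul_assoc]
      _ = 1 := by
          rw [hU', Matrix.mul_one, Matrix.diagonal_mul_diagonal]
          have : (fun k => (d k + η) * (d k + η)⁻¹) = fun _ => (1 : ℝ) := by
            funext k; exact mul_inv_cancel₀ (hnz k)
          rw [this, Matrix.diagonal_one, Matrix.mul_one, hU]
  rw [hinv]
  calc (U * Matrix.diagonal d * Uᵀ) * (U * Matrix.diagonal (fun k => (d k + η)⁻¹) * Uᵀ) *
        (U * Matrix.diagonal d * Uᵀ)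
      = U * (Matrix.diagonal d * (Uᵀ * U) * Matrix.diagonal (fun k => (d k + η)⁻¹) *
          (Uᵀ * U) * Matrix.diagonal d) * Uᵀ := by simp only [Matrix.mul_assoc]
    _ = U * Matrix.diagonal (fun k => d k * (d k + η)⁻¹ * d k) * Uᵀ := by
        rw [hU', Matrix.mul_one, Matrix.mul_one, Matrix.diagonal_mul_diagonal,
          Matrix.diagonal_mul_diagonal]

theorem stmt14 (n1 n2 : ℕ) (hn1 : 0 < n1) (hn2 : 0 < n2)
    (R1 U1 : Matrix (Fin n1) (Fin n1) ℝ) (R2 U2 : Matrix (Fin n2) (Fin n2) ℝ)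
    (lam1 : Fin n1 → ℝ) (lam2 : Fin n2 → ℝ)
    (hR1sym : R1.IsSymm) (hR2sym : R2.IsSymm)
    (hU1 : U1 * U1ᵀ = 1) (hU1' : U1ᵀ * U1 = 1)
    (hU2 : U2 * U2ᵀ = 1) (hU2' : U2ᵀ * U2 = 1)
    (hR1 : R1 = U1 * Matrix.diagonal lam1 * U1ᵀ)
    (hR2 : R2 = U2 * Matrix.diagonal lam2 * U2ᵀ)
    (η : ℝ)
    (hnz : ∀ (i : Fin n1) (j : Fin n2), lam1 i * lam2 j + η ≠ 0)
    (hd1 : ∀ i : Fin n1, R1 i i = 1) (hd2 : ∀ j : Fin n2, R2 j j = 1)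
    (i : Fin n1) (j : Fin n2) :
    (R2 ⊗ₖ R1 -
        (R2 ⊗ₖ R1) *
          (R2 ⊗ₖ R1 + η • (1 : Matrix (Fin n2 × Fin n1) (Fin n2 × Fin n1) ℝ))⁻¹ *
          (R2 ⊗ₖ R1)) (j, i) (j, i)
      = 1 - ∑ j' : Fin n2, ∑ i' : Fin n1,
          ((R1 * U1) i i') ^ 2 * ((R2 * U2) j j') ^ 2 / (lam1 i' * lam2 j' + η) := by
  set U : Matrix (Fin n2 × Fin n1) (Fin n2 × Fin n1) ℝ := U2 ⊗ₖ U1 with hUdef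
  set d : Fin n2 × Fin n1 → ℝ := fun p => lam2 p.1 * lam1 p.2 with hddef
  have hM : R2 ⊗ₖ R1 = U * Matrix.diagonal d * Uᵀ := by
    rw [hUdef, hR1, hR2, Matrix.mul_kronecker_mul, Matrix.mul_kronecker_mul,
      Matrix.diagonal_kronecker_diagonal, Matrix.kroneckerMap_transpose]
  have hUo : U * Uᵀ = 1 := by
    rw [hUdef, ← Matrix.kroneckerMap_transpose, ← Matrix.mul_kronecker_mul, hU1, hU2,
      Matrix.one_kronecker_one]
  have hUo' : Uᵀ * U = 1 := by
    rw [hUdef, ← Matrix.kroneckerMap_transpose, ← Matrix.mul_kronecker_mul, hU1', hU2',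
      Matrix.one_kronecker_one]
  have hnz' : ∀ k : Fin n2 × Fin n1, d k + η ≠ 0 := by
    intro k; rw [hddef]; simpa [mul_comm] using hnz k.2 k.1
  have hdiag : (U * Matrix.diagonal d * Uᵀ) (j, i) (j, i) = 1 := by
    rw [← hM]
    simp [Matrix.kroneckerMap_apply, hd1 i, hd2 j]
  rw [Matrix.sub_apply, hM, sandwich U d η hUo hUo' hnz', hdiag, udu_apply]
  congr 1
  rw [Fintype.sum_prod_type]
  refine Finset.sum_congr rfl fun j' _ => Finset.sum_congr rfl fun i' _ => ?_
  set p : Fin n2 × Fin n1 := (j', i') with hp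
  have hRU1 : (R1 * U1) i p.2 = U1 i p.2 * lam1 p.2 := by
    rw [hR1, Matrix.mul_assoc, Matrix.mul_assoc, hU1', Matrix.mul_one, Matrix.mul_diagonal]
  have hRU2 : (R2 * U2) j p.1 = U2 j p.1 * lam2 p.1 := by
    rw [hR2, Matrix.mul_assoc, Matrix.mul_assoc, hU2', Matrix.mul_one, Matrix.mul_diagonal]
  have hUapp : U (j, i) p = U2 j p.1 * U1 i p.2 := rfl
  have hdp : d p = lam2 p.1 * lam1 p.2 := rfl
  have h1 : lam1 p.2 * lam2 p.1 + η ≠ 0 := hnz p.2 p.1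
  have h2 : d p + η ≠ 0 := hnz' p
  rw [hRU1, hRU2, hUapp, hdp]
  rw [hdp] at h2
  have h3 : lam1 i' * lam2 j' + η ≠ 0 := hnz i' j'
  simp only [hp] at h2 ⊢
  field_simp
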